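/- Let Λ be a finite-dimensional algebra and M an ab-projective Λ-module, i.e., M is a projective object of ab(M). Then stat M = cok M: a module N is M-static if and only if N is the cokernel of a map M'' → M' with M', M'' ∈ add M. -/

import Mathlib

open TensorProduct LinearMap

section StaticDefs
variable (R : Type) [Ring R] (M : Type) [AddCommGroup M] [Module R M]
variable (N : Type) [AddCommGroup N] [Module R N]

/-- The evaluation map `M ⊗[ℤ] Hom_R(M,N) → N`. -/
noncomputable def evalTensor : (M ⊗[ℤ] (M →ₗ[R] N)) →ₗ[ℤ] N :=
  TensorProduct.lift (LinearMap.mk₂ ℤ (fun m f => f m)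
    (fun m m' f => by simp) (fun z m f => by simp)
    (fun m f g => rfl) (fun z m f => rfl))

/-- The subgroup of relations defining `M ⊗_{End(M)ᵒᵖ} Hom(M,N)` as a quotient
of `M ⊗[ℤ] Hom(M,N)`. -/
noncomputable def staticRel : AddSubgroup (M ⊗[ℤ] (M →ₗ[R] N)) :=
  AddSubgroup.closure {x | ∃ (e : M →ₗ[R] M) (m : M) (f : M →ₗ[R] N),
    x = e m ⊗ₜ[ℤ] f - m ⊗ₜ[ℤ] (f ∘ₗ e)}

/-- `N` is `M`-static: the canonical map `μ_N : M ⊗_{End(M)ᵒᵖ} Hom(M,N) → N`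
is an isomorphism; equivalently (since the relations are contained in the kernel of
evaluation), the evaluation map is surjective and its kernel consists of relations. -/
def IsStatic : Prop :=
  Function.Surjective (evalTensor R M N) ∧
    ∀ x, evalTensor R M N x = 0 → x ∈ staticRel R M N

/-- `M'` belongs to `add M`: it is a direct summand of a finite direct sum of copies of `M`. -/
def InAdd (M' : Type) [AddCommGroup M'] [Module R M'] : Prop :=
  ∃ (n : ℕ) (i : M' →ₗ[R] (Fin n → M)) (p : (Fin n → M) →ₗ[R] M'),
    p ∘ₗ i = LinearMap.id

/-- `N` is generated by `M`: an epimorphic image of a finite direct sum of copies of `M`. -/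
def GeneratedBy : Prop :=
  ∃ (n : ℕ) (g : (Fin n → M) →ₗ[R] N), Function.Surjective g

end StaticDefs


open CategoryTheory Limits

instance (priority := 100) abelian_hasFiniteBiproducts {C : Type*} [CategoryTheory.Category C] [CategoryTheory.Abelian C] :
    CategoryTheory.Limits.HasFiniteBiproducts C :=
  CategoryTheory.Limits.HasFiniteBiproducts.of_hasFiniteProducts

section CatDefs
variable {C : Type*} [Category C] [Abelian C]

/-- `X` belongs to `add M`: it is a retract of a finite direct sum of copies of `M`. -/
def CatInAdd (M X : C) : Prop :=
  ∃ (n : ℕ) (s : X ⟶ ⨁ (fun _ : Fin n => M)) (r : (⨁ (fun _ : Fin n => M)) ⟶ X),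
    s ≫ r = 𝟙 X

/-- A (strictly full) exact abelian subcategory of an abelian category:
a class of objects closed under isomorphisms, containing the zero objects and
closed under kernels, cokernels and finite direct sums. -/
structure IsExactAbelianSub (P : C → Prop) : Prop where
  iso : ∀ {X Y : C}, (X ≅ Y) → P X → P Y
  zero : ∀ Z : C, IsZero Z → P Z
  ker : ∀ {X Y : C} (f : X ⟶ Y), P X → P Y → P (kernel f)
  coker : ∀ {X Y : C} (f : X ⟶ Y), P X → P Y → P (cokernel f)
  sum : ∀ {X Y : C}, P X → P Y → P (X ⊞ Y)

/-- `ab M`: the smallest exact abelian subcategory containing `M`. -/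
def abSub (M : C) (X : C) : Prop :=
  ∀ P : C → Prop, IsExactAbelianSub P → P M → P X

/-- `G` is a projective object relative to the subcategory `P`. -/
def ProjIn (P : C → Prop) (G : C) : Prop :=
  P G ∧ ∀ (X Y : C), P X → P Y → ∀ (e : X ⟶ Y), Epi e →
    ∀ f : G ⟶ Y, ∃ g : G ⟶ X, g ≫ e = f

/-- `M` is ab-projective: projective as an object of `ab M`. -/
def AbProjective (M : C) : Prop := ProjIn (abSub M) M

/-- relative simple objects of the subcategory `P`. -/
def RelSimple (P : C → Prop) (X : C) : Prop :=
  P X ∧ ¬ IsZero X ∧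
    ∀ (Y : C) (i : Y ⟶ X), Mono i → P Y → IsZero Y ∨ IsIso i

/-- `X` has a filtration of length `n` inside the subcategory `P` whose
consecutive quotients satisfy `Q`. -/
def HasFiltration (P Q : C → Prop) (X : C) (n : ℕ) : Prop :=
  ∃ (F : Fin (n+1) → C) (g : ∀ i : Fin n, F i.castSucc ⟶ F i.succ),
    IsZero (F 0) ∧ Nonempty (F (Fin.last n) ≅ X) ∧
    ∀ i : Fin n, Mono (g i) ∧ P (F i.castSucc) ∧ P (F i.succ) ∧ Q (cokernel (g i))

/-- relative semisimple objects: finite direct sums of relative simples. -/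
def RelSemisimple (P : C → Prop) (X : C) : Prop :=
  ∃ (m : ℕ) (s : Fin m → C), (∀ i, RelSimple P (s i)) ∧ Nonempty (X ≅ ⨁ s)

end CatDefs

section Aux
variable {R : Type} [Ring R] {M : Type} [AddCommGroup M] [Module R M]
variable {N : Type} [AddCommGroup N] [Module R N]

lemma evalTensor_tmul (m : M) (f : M →ₗ[R] N) : evalTensor R M N (m ⊗ₜ[ℤ] f) = f m := rfl

lemma staticRel_basic (e : M →ₗ[R] M) (m : M) (f : M →ₗ[R] N) :
    e m ⊗ₜ[ℤ] f - m ⊗ₜ[ℤ] (f ∘ₗ e) ∈ staticRel R M N :=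
  AddSubgroup.subset_closure ⟨e, m, f, rfl⟩

lemma staticRel_le_ker : staticRel R M N ≤ (evalTensor R M N).toAddMonoidHom.ker := by
  rw [staticRel, AddSubgroup.closure_le]
  rintro x ⟨e, m, f, rfl⟩
  simp [AddMonoidHom.mem_ker, evalTensor_tmul]

lemma staticRel_shift {b : ℕ} (g : M →ₗ[R] (Fin b → M)) (h : (Fin b → M) →ₗ[R] N) (m : M) :
    m ⊗ₜ[ℤ] (h ∘ₗ g) - ∑ j, (g m j) ⊗ₜ[ℤ] (h ∘ₗ LinearMap.single R (fun _ : Fin b => M) j)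
      ∈ staticRel R M N := by
  have hdec : h ∘ₗ g = ∑ j, (h ∘ₗ LinearMap.single R (fun _ : Fin b => M) j) ∘ₗ
      ((LinearMap.proj j : (Fin b → M) →ₗ[R] M) ∘ₗ g) := by
    ext m'
    simp only [LinearMap.comp_apply, LinearMap.sum_apply, LinearMap.proj_apply,
      LinearMap.coe_single]
    rw [← map_sum]
    congr 1
    exact (Finset.univ_sum_single (g m')).symm
  rw [hdec, tmul_sum]
  rw [← Finset.sum_sub_distrib]
  apply AddSubgroup.sum_mem
  intro j _
  have := staticRel_basic ((LinearMap.proj j : (Fin b → M) →ₗ[R] M) ∘ₗ g) m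
    (h ∘ₗ LinearMap.single R (fun _ : Fin b => M) j)
  have h2 := AddSubgroup.neg_mem _ this
  simpa [neg_sub, LinearMap.comp_assoc] using h2
end Aux

section CatAux
variable (Λ : Type) [Ring Λ] (M : Type) [AddCommGroup M] [Module Λ M]

def piFinSuccLinearEquiv (n : ℕ) : (Fin (n+1) → M) ≃ₗ[Λ] M × (Fin n → M) where
  toFun v := (v 0, fun i => v i.succ)
  invFun p := Fin.cons p.1 p.2
  map_add' v w := rfl
  map_smul' c v := rfl
  left_inv v := by
    funext i
    exact Fin.cases rfl (fun j => rfl) i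
  right_inv p := by
    refine Prod.ext rfl ?_
    funext i; rfl

lemma abSub_pi (n : ℕ) (P : ModuleCat Λ → Prop) (hP : IsExactAbelianSub P)
    (hM : P (ModuleCat.of Λ M)) : P (ModuleCat.of Λ (Fin n → M)) := by
  induction n with
  | zero =>
      refine hP.zero _ ?_
      haveI : Subsingleton (Fin 0 → M) := ⟨fun a b => funext fun i => i.elim0⟩
      exact ModuleCat.isZero_of_subsingleton _
  | succ n ih =>
      have hsum := hP.sum hM ih
      refine hP.iso ?_ hsum
      refine (ModuleCat.biprodIsoProd (ModuleCat.of Λ M) (ModuleCat.of Λ (Fin n → M))).trans ?_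
      exact (piFinSuccLinearEquiv Λ M n).symm.toModuleIso
end CatAux

section Backward
variable (Λ : Type) [Ring Λ] (M : Type) [AddCommGroup M] [Module Λ M]
variable (N : Type) [AddCommGroup N] [Module Λ N]

lemma isStatic_of_presentation (hproj : AbProjective (ModuleCat.of Λ M))
    {a b : ℕ} (f : (Fin a → M) →ₗ[Λ] (Fin b → M)) (q : (Fin b → M) →ₗ[Λ] N)
    (hq : Function.Surjective q) (hfq : LinearMap.range f = LinearMap.ker q) :
    IsStatic Λ M N := by
  have hNab : abSub (ModuleCat.of Λ M) (ModuleCat.of Λ N) := by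
    intro P hP hM
    have hco := hP.coker (ModuleCat.ofHom f) (abSub_pi Λ M a P hP hM) (abSub_pi Λ M b P hP hM)
    refine hP.iso ?_ hco
    refine (ModuleCat.cokernelIsoRangeQuotient (ModuleCat.ofHom f)).trans ?_
    refine LinearEquiv.toModuleIso ?_
    exact (Submodule.quotEquivOfEq _ _ hfq).trans (q.quotKerEquivOfSurjective hq)
  have hlift : ∀ ψ : M →ₗ[Λ] N, ∃ g : M →ₗ[Λ] (Fin b → M), q ∘ₗ g = ψ := by
    intro ψ
    haveI : Epi (ModuleCat.ofHom q) := (ModuleCat.epi_iff_surjective _).mpr hq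
    obtain ⟨g, hg⟩ := hproj.2 (ModuleCat.of Λ (Fin b → M)) (ModuleCat.of Λ N)
      (fun P hP hM => abSub_pi Λ M b P hP hM) hNab (ModuleCat.ofHom q) inferInstance
      (ModuleCat.ofHom ψ)
    exact ⟨g.hom, congrArg ModuleCat.Hom.hom hg⟩
  have hqf : q ∘ₗ f = 0 := by
    refine LinearMap.ext fun u => ?_
    have : f u ∈ LinearMap.ker q := hfq ▸ LinearMap.mem_range_self f u
    simpa using this
  constructor
  · intro n
    obtain ⟨v, rfl⟩ := hq n
    refine ⟨∑ j, v j ⊗ₜ[ℤ] (q ∘ₗ LinearMap.single Λ (fun _ : Fin b => M) j), ?_⟩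
    rw [map_sum]
    simp only [evalTensor_tmul, LinearMap.comp_apply, LinearMap.coe_single]
    rw [← map_sum]
    congr 1
    exact Finset.univ_sum_single v
  · intro x hx
    have key : ∀ x : M ⊗[ℤ] (M →ₗ[Λ] N), ∃ w : Fin b → M,
        x - ∑ j, w j ⊗ₜ[ℤ] (q ∘ₗ LinearMap.single Λ (fun _ : Fin b => M) j)
          ∈ staticRel Λ M N := by
      intro x
      induction x using TensorProduct.induction_on with
      | zero => exact ⟨0, by simp [(staticRel Λ M N).zero_mem]⟩
      | tmul m ψ =>
          obtain ⟨g, hg⟩ := hlift ψ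
          refine ⟨g m, ?_⟩
          have := staticRel_shift g q m
          rwa [hg] at this
      | add x y ihx ihy =>
          obtain ⟨w1, h1⟩ := ihx
          obtain ⟨w2, h2⟩ := ihy
          refine ⟨w1 + w2, ?_⟩
          have := (staticRel Λ M N).add_mem h1 h2
          convert this using 1
          simp only [Pi.add_apply, add_tmul, Finset.sum_add_distrib]
          abel
    obtain ⟨w, hw⟩ := key x
    have heval : evalTensor Λ M N
        (∑ j, w j ⊗ₜ[ℤ] (q ∘ₗ LinearMap.single Λ (fun _ : Fin b => M) j)) = q w := by
      rw [map_sum]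
      simp only [evalTensor_tmul, LinearMap.comp_apply, LinearMap.coe_single]
      rw [← map_sum]
      congr 1
      exact Finset.univ_sum_single w
    have hqw : q w = 0 := by
      have h0 : evalTensor Λ M N
          (x - ∑ j, w j ⊗ₜ[ℤ] (q ∘ₗ LinearMap.single Λ (fun _ : Fin b => M) j)) = 0 :=
        staticRel_le_ker hw
      rw [map_sub, hx, heval, zero_sub, neg_eq_zero] at h0
      exact h0
    have hwr : w ∈ LinearMap.range f := by rw [hfq]; exact hqw
    obtain ⟨u, hu⟩ := hwr
    have hsum : ∑ j, w j ⊗ₜ[ℤ] (q ∘ₗ LinearMap.single Λ (fun _ : Fin b => M) j)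
        ∈ staticRel Λ M N := by
      have hwdec : ∀ j, w j = ∑ i, f (LinearMap.single Λ (fun _ : Fin a => M) i (u i)) j := by
        intro j
        have hfu : f u = ∑ i, f (LinearMap.single Λ (fun _ : Fin a => M) i (u i)) := by
          rw [← map_sum]
          congr 1
          exact (Finset.univ_sum_single u).symm
        rw [← hu, hfu]
        exact Finset.sum_apply j Finset.univ _
      have hrw : ∑ j, w j ⊗ₜ[ℤ] (q ∘ₗ LinearMap.single Λ (fun _ : Fin b => M) j)
          = ∑ i, ∑ j, ((f ∘ₗ LinearMap.single Λ (fun _ : Fin a => M) i) (u i) j)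
              ⊗ₜ[ℤ] (q ∘ₗ LinearMap.single Λ (fun _ : Fin b => M) j) := by
        rw [Finset.sum_comm]
        refine Finset.sum_congr rfl fun j _ => ?_
        rw [hwdec j, TensorProduct.sum_tmul]
        rfl
      rw [hrw]
      apply AddSubgroup.sum_mem
      intro i _
      have hs := staticRel_shift (f ∘ₗ LinearMap.single Λ (fun _ : Fin a => M) i) q (u i)
      have h0 : q ∘ₗ (f ∘ₗ LinearMap.single Λ (fun _ : Fin a => M) i) = 0 := by
        rw [← LinearMap.comp_assoc, hqf, LinearMap.zero_comp]
      rw [h0] at hs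
      have := AddSubgroup.neg_mem _ hs
      simpa [neg_sub, tmul_zero] using this
    have hfin := (staticRel Λ M N).add_mem hw hsum
    rwa [sub_add_cancel] at hfin
end Backward

section Forward

set_option maxHeartbeats 1000000 in
lemma presentation_of_isStatic (k : Type) [Field k] (Λ : Type) [Ring Λ] [Algebra k Λ]
    [FiniteDimensional k Λ]
    (M : Type) [AddCommGroup M] [Module Λ M] [Module.Finite Λ M]
    (N : Type) [AddCommGroup N] [Module Λ N] [Module.Finite Λ N]
    (hstat : IsStatic Λ M N) :
    ∃ (a b : ℕ) (f : (Fin a → M) →ₗ[Λ] (Fin b → M)) (q : (Fin b → M) →ₗ[Λ] N),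
      Function.Surjective q ∧ LinearMap.range f = LinearMap.ker q := by
  classical
  letI : Module k M := Module.compHom M (algebraMap k Λ)
  letI : Module k N := Module.compHom N (algebraMap k Λ)
  haveI : IsScalarTower k Λ M :=
    ⟨fun c l m => by
      show (c • l) • m = algebraMap k Λ c • (l • m)
      rw [Algebra.smul_def, mul_smul]⟩
  haveI : IsScalarTower k Λ N :=
    ⟨fun c l n => by
      show (c • l) • n = algebraMap k Λ c • (l • n)
      rw [Algebra.smul_def, mul_smul]⟩
  haveI : FiniteDimensional k M := Module.Finite.trans Λ M
  haveI : FiniteDimensional k N := Module.Finite.trans Λ N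
  obtain ⟨b, φ, hφ⟩ := Module.Finite.exists_fin (R := k) (M := M →ₗ[Λ] N)
  set q : (Fin b → M) →ₗ[Λ] N := ∑ j, (φ j) ∘ₗ (LinearMap.proj j) with hqdef
  have hq_apply : ∀ v : Fin b → M, q v = ∑ j, φ j (v j) := by
    intro v
    simp [hqdef, LinearMap.sum_apply]
  have hq_single : ∀ (j : Fin b) (m : M), q (Pi.single j m) = φ j m := by
    intro j m
    rw [hq_apply, Finset.sum_eq_single j]
    · rw [Pi.single_eq_same]
    · intro j' _ hne
      rw [Pi.single_eq_of_ne hne, map_zero]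
    · intro h
      exact absurd (Finset.mem_univ j) h
  have hcomb : ∀ (c : Fin b → k) (m : M), q (fun j => c j • m) = (∑ j, c j • φ j) m := by
    intro c m
    rw [hq_apply]
    simp only [LinearMap.sum_apply, LinearMap.smul_apply]
    refine Finset.sum_congr rfl fun j _ => ?_
    exact LinearMap.map_smul_of_tower (φ j) (c j) m
  have hqsurj : Function.Surjective q := by
    intro n
    obtain ⟨x, hx⟩ := hstat.1 n
    have hmem : ∀ y : M ⊗[ℤ] (M →ₗ[Λ] N), evalTensor Λ M N y ∈ LinearMap.range q := by
      intro y
      induction y using TensorProduct.induction_on with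
      | zero => simp
      | tmul m ψ =>
          have hψ : ψ ∈ Submodule.span k (Set.range φ) := hφ ▸ Submodule.mem_top
          obtain ⟨c, hc⟩ := (Submodule.mem_span_range_iff_exists_fun k).mp hψ
          refine ⟨fun j => c j • m, ?_⟩
          rw [hcomb, hc]
          rfl
      | add y z ihy ihz =>
          rw [map_add]
          exact Submodule.add_mem _ ihy ihz
    obtain ⟨v, hv⟩ := hmem x
    exact ⟨v, by rw [hv, hx]⟩
  let compq : (M →ₗ[Λ] (Fin b → M)) →ₗ[k] (M →ₗ[Λ] N) :=
    { toFun := fun g => q ∘ₗ g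
      map_add' := fun g₁ g₂ => by
        refine LinearMap.ext fun m => ?_
        simp
      map_smul' := fun c g => by
        refine LinearMap.ext fun m => ?_
        simp only [LinearMap.comp_apply, LinearMap.smul_apply, RingHom.id_apply]
        exact LinearMap.map_smul_of_tower q c (g m) }
  obtain ⟨a, g', hg'⟩ := Module.Finite.exists_fin (R := k) (M := LinearMap.ker compq)
  set f : (Fin a → M) →ₗ[Λ] (Fin b → M) :=
    ∑ i, ((g' i : M →ₗ[Λ] (Fin b → M)) ∘ₗ (LinearMap.proj i)) with hfdef
  have hf_apply : ∀ u : Fin a → M, f u = ∑ i, (g' i : M →ₗ[Λ] (Fin b → M)) (u i) := by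
    intro u
    simp [hfdef, LinearMap.sum_apply]
  have hrange_le : LinearMap.range f ≤ LinearMap.ker q := by
    rintro _ ⟨u, rfl⟩
    rw [LinearMap.mem_ker, hf_apply, map_sum]
    refine Finset.sum_eq_zero fun i _ => ?_
    have h0 : compq (g' i : M →ₗ[Λ] (Fin b → M)) = 0 := (g' i).2
    exact LinearMap.ext_iff.mp h0 (u i)
  have Hrange : ∀ g : M →ₗ[Λ] (Fin b → M), q ∘ₗ g = 0 → ∀ m : M, g m ∈ LinearMap.range f := by
    intro g hg m
    have hgW : g ∈ LinearMap.ker compq := LinearMap.mem_ker.mpr hg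
    have hmem : (⟨g, hgW⟩ : LinearMap.ker compq) ∈ Submodule.span k (Set.range g') :=
      hg' ▸ Submodule.mem_top
    obtain ⟨c, hc⟩ := (Submodule.mem_span_range_iff_exists_fun k).mp hmem
    have hc' : ∑ i, c i • (g' i : M →ₗ[Λ] (Fin b → M)) = g := by
      have hc0 := congrArg (Submodule.subtype (LinearMap.ker compq)) hc
      rw [map_sum] at hc0
      simp only [map_smul, Submodule.coe_subtype] at hc0
      exact hc0
    refine ⟨fun i => c i • m, ?_⟩
    calc f (fun i => c i • m)
        = ∑ i, (g' i : M →ₗ[Λ] (Fin b → M)) (c i • m) := hf_apply _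
      _ = ∑ i, (c i • (g' i : M →ₗ[Λ] (Fin b → M))) m := by
            refine Finset.sum_congr rfl fun i _ => ?_
            rw [LinearMap.smul_apply, LinearMap.map_smul_of_tower]
      _ = (∑ i, c i • (g' i : M →ₗ[Λ] (Fin b → M))) m := by rw [LinearMap.sum_apply]
      _ = g m := by rw [hc']
  have hcompq_surj : LinearMap.range compq = ⊤ := by
    rw [LinearMap.range_eq_top]
    intro ψ
    have hψ : ψ ∈ Submodule.span k (Set.range φ) := hφ ▸ Submodule.mem_top
    obtain ⟨c, hc⟩ := (Submodule.mem_span_range_iff_exists_fun k).mp hψ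
    refine ⟨LinearMap.pi (fun j => c j • (LinearMap.id : M →ₗ[Λ] M)), ?_⟩
    refine LinearMap.ext fun m => ?_
    show q (LinearMap.pi (fun j : Fin b => c j • (LinearMap.id : M →ₗ[Λ] M)) m) = ψ m
    have hpi : LinearMap.pi (fun j : Fin b => c j • (LinearMap.id : M →ₗ[Λ] M)) m
        = fun j => c j • m := rfl
    rw [hpi, hcomb, hc]
  obtain ⟨s, hs⟩ := compq.exists_rightInverse_of_surjective hcompq_surj
  have hsψ : ∀ ψ : M →ₗ[Λ] N, q ∘ₗ (s ψ) = ψ := by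
    intro ψ
    exact LinearMap.ext_iff.mp hs ψ
  let D : M ⊗[ℤ] (M →ₗ[Λ] N) →ₗ[ℤ] ((Fin b → M) ⧸ LinearMap.range f) :=
    TensorProduct.lift (LinearMap.mk₂ ℤ
      (fun m ψ => Submodule.mkQ (LinearMap.range f) (s ψ m))
      (fun m m' ψ => by rw [map_add, map_add])
      (fun z m ψ => by rw [map_zsmul, map_zsmul])
      (fun m ψ ψ' => by rw [map_add, LinearMap.add_apply, map_add])
      (fun z m ψ => by rw [map_zsmul, LinearMap.smul_apply, map_zsmul]))
  have hD_tmul : ∀ (m : M) (ψ : M →ₗ[Λ] N),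
      D (m ⊗ₜ[ℤ] ψ) = Submodule.mkQ (LinearMap.range f) (s ψ m) := fun m ψ => rfl
  have hq_single' : ∀ j : Fin b,
      q ∘ₗ LinearMap.single Λ (fun _ : Fin b => M) j = φ j := by
    intro j
    refine LinearMap.ext fun m => ?_
    simpa using hq_single j m
  have hle : staticRel Λ M N ≤ D.toAddMonoidHom.ker := by
    rw [staticRel, AddSubgroup.closure_le]
    rintro x ⟨e, m, ψ, rfl⟩
    show D (e m ⊗ₜ[ℤ] ψ - m ⊗ₜ[ℤ] (ψ ∘ₗ e)) = 0
    rw [map_sub, hD_tmul, hD_tmul, ← map_sub]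
    have hker : q ∘ₗ ((s ψ) ∘ₗ e - s (ψ ∘ₗ e)) = 0 := by
      rw [LinearMap.comp_sub, ← LinearMap.comp_assoc, hsψ, hsψ, sub_self]
    have hmem := Hrange _ hker m
    have : s ψ (e m) - s (ψ ∘ₗ e) m = ((s ψ) ∘ₗ e - s (ψ ∘ₗ e)) m := rfl
    rw [this, Submodule.mkQ_apply, Submodule.Quotient.mk_eq_zero]
    exact hmem
  refine ⟨a, b, f, q, hqsurj, le_antisymm hrange_le ?_⟩
  intro w hw
  have hqw : q w = 0 := hw
  set x : M ⊗[ℤ] (M →ₗ[Λ] N) := ∑ j, w j ⊗ₜ[ℤ] (φ j) with hxdef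
  have hx : evalTensor Λ M N x = 0 := by
    rw [hxdef, map_sum]
    simp only [evalTensor_tmul]
    rw [← hq_apply]
    exact hqw
  have hxrel := hstat.2 x hx
  have hDx : D x = 0 := hle hxrel
  have hDx' : Submodule.mkQ (LinearMap.range f) (∑ j, s (φ j) (w j)) = 0 := by
    rw [← hDx, hxdef, map_sum, map_sum]
    rfl
  have h1 : (∑ j, s (φ j) (w j)) ∈ LinearMap.range f := by
    rw [← Submodule.Quotient.mk_eq_zero]
    exact hDx'
  have h2 : w - ∑ j, s (φ j) (w j) ∈ LinearMap.range f := by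
    have hsplit : w - ∑ j, s (φ j) (w j)
        = ∑ j, (LinearMap.single Λ (fun _ : Fin b => M) j - s (φ j)) (w j) := by
      simp only [LinearMap.sub_apply, LinearMap.coe_single]
      rw [Finset.sum_sub_distrib, Finset.univ_sum_single]
    rw [hsplit]
    refine Submodule.sum_mem _ fun j _ => ?_
    refine Hrange _ ?_ (w j)
    rw [LinearMap.comp_sub, hq_single', hsψ, sub_self]
  have := Submodule.add_mem _ h2 h1
  rwa [sub_add_cancel] at this

end Forward

section Stmt11
open CategoryTheory Limits

/-- Let `Λ` be a finite-dimensional algebra and `M` an ab-projective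
finite-dimensional `Λ`-module (projective as an object of `ab M`). Then `stat M = cok M`:
a finite-dimensional module `N` is `M`-static if and only if it is the cokernel of a map
between objects of `add M` (equivalently, of a map between finite direct powers of `M`). -/
theorem stat_eq_cok_of_abProjective
    (k : Type) [Field k] (Λ : Type) [Ring Λ] [Algebra k Λ] [FiniteDimensional k Λ]
    (M : Type) [AddCommGroup M] [Module Λ M] [Module.Finite Λ M]
    (hproj : AbProjective (ModuleCat.of Λ M)) :
    ∀ (N : Type) (_ : AddCommGroup N) (_ : Module Λ N) (_ : Module.Finite Λ N),
      IsStatic Λ M N ↔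
        ∃ (a b : ℕ) (f : (Fin a → M) →ₗ[Λ] (Fin b → M)) (q : (Fin b → M) →ₗ[Λ] N),
          Function.Surjective q ∧ LinearMap.range f = LinearMap.ker q := by
  intro N _ _ _
  constructor
  · intro hstat
    exact presentation_of_isStatic k Λ M N hstat
  · rintro ⟨a, b, f, q, hq, hfq⟩
    exact isStatic_of_presentation Λ M N hproj f q hq hfq

end Stmt11
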